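/- For any rack X, the relation Q_X defined by (x,y) ∈ Q_X iff x = y ◁^k y for some integer k, is a congruence on X: it is reflexive, symmetric, transitive and compatible with the rack operation (if (a,b) ∈ Q_X and (c,d) ∈ Q_X then (a ◁ c, b ◁ d) ∈ Q_X). -/

import Mathlib

/-- A rack: a set with operations `◁`, `◁⁻¹` satisfying (R1) and (R2). -/
class PaperRack (X : Type*) where
  act : X → X → X
  inv : X → X → X
  r1a : ∀ x y, inv (act x y) y = x
  r1b : ∀ x y, act (inv x y) y = x
  r2 : ∀ x y z, act (act x y) z = act (act x z) (act y z)

infixl:70 " ◁ " => PaperRack.act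
infixl:70 " ◁⁻¹ " => PaperRack.inv

/-- `y ◁^n y` for a natural number `n`. -/
def selfIterPos {X : Type*} [PaperRack X] (y : X) : ℕ → X
  | 0 => y
  | n + 1 => selfIterPos y n ◁ selfIterPos y n

/-- `y ◁^k y` for an integer `k` (using `◁⁻¹` when `k < 0`, with `y ◁^0 y = y`). -/
def selfIter {X : Type*} [PaperRack X] (y : X) : ℤ → X
  | Int.ofNat n => selfIterPos y n
  | Int.negSucc n =>
      (fun m => Nat.rec (motive := fun _ => X) (y ◁⁻¹ y)
        (fun _ z => z ◁⁻¹ z) m) n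

/-- The relation `Q_X`: `(x, y) ∈ Q_X` iff `x = y ◁^k y` for some integer `k`. -/
def QX {X : Type*} [PaperRack X] (x y : X) : Prop :=
  ∃ k : ℤ, x = selfIter y k

section Lemmas
variable {X : Type*} [PaperRack X]

open PaperRack

lemma act_inj {a b x : X} (h : a ◁ x = b ◁ x) : a = b := by
  have := congrArg (fun z => z ◁⁻¹ x) h
  simpa [r1a] using this

lemma act_sq (u x : X) : u ◁ (x ◁ x) = u ◁ x := by
  have h : ((u ◁⁻¹ x) ◁ x) ◁ x = ((u ◁⁻¹ x) ◁ x) ◁ (x ◁ x) := r2 _ _ _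
  simpa [r1b] using h.symm

lemma act_invsq (u x : X) : u ◁ (x ◁⁻¹ x) = u ◁ x := by
  apply act_inj (x := x)
  have h : (u ◁ (x ◁⁻¹ x)) ◁ x = (u ◁ x) ◁ ((x ◁⁻¹ x) ◁ x) := r2 _ _ _
  rw [h, r1b]

lemma sq_inv_sq (a : X) : (a ◁ a) ◁⁻¹ (a ◁ a) = a := by
  apply act_inj (x := a ◁ a)
  rw [r1b, act_sq]

lemma invsq_sq (a : X) : (a ◁⁻¹ a) ◁ (a ◁⁻¹ a) = a := by
  rw [act_invsq, r1b]

lemma selfIter_zero (y : X) : selfIter y 0 = y := rfl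

lemma selfIter_succ (y : X) (k : ℤ) :
    selfIter y (k + 1) = selfIter y k ◁ selfIter y k := by
  cases k with
  | ofNat n => rfl
  | negSucc n =>
    cases n with
    | zero =>
      show selfIter y 0 = _
      simp only [selfIter, selfIter_zero]
      exact (invsq_sq y).symm
    | succ m =>
      show selfIter y (Int.negSucc m) = _
      have : selfIter y (Int.negSucc (m + 1)) =
          selfIter y (Int.negSucc m) ◁⁻¹ selfIter y (Int.negSucc m) := rfl
      rw [this, invsq_sq]

lemma selfIter_pred (y : X) (k : ℤ) :
    selfIter y (k - 1) = selfIter y k ◁⁻¹ selfIter y k := by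
  have h : selfIter y k = selfIter y (k - 1) ◁ selfIter y (k - 1) := by
    have := selfIter_succ y (k - 1)
    simpa using this
  rw [h, sq_inv_sq]

lemma selfIter_shift (y : X) (m k : ℤ) :
    selfIter (selfIter y m) k = selfIter y (m + k) := by
  induction k using Int.induction_on with
  | zero => simp [selfIter_zero]
  | succ n ih =>
    rw [selfIter_succ, ih, ← selfIter_succ]
    ring_nf
  | pred n ih =>
    rw [show (-(n : ℤ) - 1) = (-(n : ℤ)) - 1 by ring, selfIter_pred, ih,
      ← selfIter_pred]
    ring_nf

lemma act_selfIter (u y : X) (k : ℤ) : u ◁ selfIter y k = u ◁ y := by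
  induction k using Int.induction_on with
  | zero => rfl
  | succ n ih => rw [selfIter_succ, act_sq, ih]
  | pred n ih =>
    rw [show (-(n : ℤ) - 1) = (-(n : ℤ)) - 1 by ring, selfIter_pred,
      act_invsq, ih]

lemma selfIter_act (b d : X) (m : ℤ) :
    selfIter b m ◁ d = selfIter (b ◁ d) m := by
  induction m using Int.induction_on with
  | zero => rfl
  | succ n ih =>
    rw [selfIter_succ, selfIter_succ, PaperRack.r2, ih]
  | pred n ih =>
    rw [show (-(n : ℤ) - 1) = (-(n : ℤ)) - 1 by ring, selfIter_pred,
      selfIter_pred, ← ih]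
    set s := selfIter b (-(n : ℤ)) with hs
    apply act_inj (x := s ◁ d)
    rw [r1b]
    calc ((s ◁⁻¹ s) ◁ d) ◁ (s ◁ d) = ((s ◁⁻¹ s) ◁ s) ◁ d := (r2 _ _ _).symm
    _ = s ◁ d := by rw [r1b]

end Lemmas

/-- `Q_X` is a congruence: it is reflexive, symmetric, transitive and
compatible with the rack operation. -/
theorem QX_is_congruence {X : Type*} [PaperRack X] :
    (∀ x : X, QX x x) ∧
    (∀ x y : X, QX x y → QX y x) ∧
    (∀ x y z : X, QX x y → QX y z → QX x z) ∧
    (∀ a b c d : X, QX a b → QX c d → QX (a ◁ c) (b ◁ d)) := by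
  refine ⟨fun x => ⟨0, rfl⟩, ?_, ?_, ?_⟩
  · rintro x y ⟨k, rfl⟩
    exact ⟨-k, by rw [selfIter_shift, add_neg_cancel, selfIter_zero]⟩
  · rintro x y z ⟨k, rfl⟩ ⟨m, rfl⟩
    exact ⟨m + k, selfIter_shift z m k⟩
  · rintro a b c d ⟨m, rfl⟩ ⟨n, rfl⟩
    exact ⟨m, by rw [act_selfIter, selfIter_act]⟩
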